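/- Let K be a 0-core CRG with exactly t white vertices and at least n black vertices. Then n × K(t+1,0) ⊑ n × K, i.e., the n-fold blow-up of the all-gray CRG on t+1 white vertices embeds into the n-fold blow-up of K in the sense of colored graphs. -/
import Mathlib


open Finset

inductive EColor | white | black | gray
deriving DecidableEq

/-- The `p`-weight of an edge color: `p` for white, `1-p` for black, `0` for gray. -/
def wval (p : ℝ) : EColor → ℝ
  | .white => p
  | .black => 1 - p
  | .gray => 0

/-- The matrix `M_K(p)` of a CRG given by vertex colors `vb` (`true` = black)
and edge colors `ec`. -/
def Mmat {V : Type*} [DecidableEq V] (vb : V → Bool) (ec : V → V → EColor) (p : ℝ)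
    (x y : V) : ℝ :=
  if x = y then (if vb x then 1 - p else p) else wval p (ec x y)

/-- `μ` is a probability mass. -/
def IsProb {V : Type*} [Fintype V] (μ : V → ℝ) : Prop :=
  (∀ x, 0 ≤ μ x) ∧ ∑ x, μ x = 1

/-- The quadratic form `⟨μ, M_K(p) μ⟩`. -/
def QF {V : Type*} [Fintype V] [DecidableEq V] (vb : V → Bool) (ec : V → V → EColor)
    (p : ℝ) (μ : V → ℝ) : ℝ :=
  ∑ x, ∑ y, μ x * Mmat vb ec p x y * μ y

/-- `g` is the minimum of the quadratic form over probability masses, i.e. `g = g_K(p)`. -/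
def gIs {V : Type*} [Fintype V] [DecidableEq V] (vb : V → Bool) (ec : V → V → EColor)
    (p g : ℝ) : Prop :=
  IsLeast {t | ∃ μ : V → ℝ, IsProb μ ∧ t = QF vb ec p μ} g

/-- The weighted gray-degree `d_G(u) = ∑_{v : uv gray} μ(v)`. -/
def grayDeg {V : Type*} [Fintype V] [DecidableEq V] (ec : V → V → EColor) (μ : V → ℝ)
    (u : V) : ℝ :=
  ∑ v ∈ Finset.univ.filter (fun v => v ≠ u ∧ ec u v = EColor.gray), μ v

/-- Colored-graph containment `G ⊑ H` between edge-colorings: an injection sending black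
edges to black-or-gray, white edges to white-or-gray, and gray edges to gray. -/
def SubCG {A B : Type*} (e1 : A → A → EColor) (e2 : B → B → EColor) : Prop :=
  ∃ φ : A → B, Function.Injective φ ∧ ∀ a b, a ≠ b →
    (e1 a b = EColor.black → (e2 (φ a) (φ b) = EColor.black ∨ e2 (φ a) (φ b) = EColor.gray)) ∧
    (e1 a b = EColor.white → (e2 (φ a) (φ b) = EColor.white ∨ e2 (φ a) (φ b) = EColor.gray)) ∧
    (e1 a b = EColor.gray → e2 (φ a) (φ b) = EColor.gray)

/-- The `m`-fold blow-up of a CRG as a colored graph: each vertex becomes a class of `m`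
vertices, internal edges get the vertex color, cross edges get the edge color. -/
def blowup {V : Type*} [DecidableEq V] (vb : V → Bool) (ec : V → V → EColor) (m : ℕ) :
    V × Fin m → V × Fin m → EColor :=
  fun x y => if x.1 = y.1 then (if vb x.1 then EColor.black else EColor.white)
    else ec x.1 y.1

/-- if `K` is a 0-core CRG with exactly `t` white vertices and at least `n`
black vertices, then `n × K(t+1,0) ⊑ n × K`. -/
theorem stmt12 {V : Type*} [Fintype V] [DecidableEq V]
    (vb : V → Bool) (ec : V → V → EColor) (hsymm : ∀ a b, ec a b = ec b a)
    (hnb : ∀ x y, x ≠ y → ec x y ≠ EColor.black)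
    (hwe : ∀ x y, x ≠ y → ec x y = EColor.white → vb x = true ∧ vb y = true)
    (t n : ℕ)
    (hw : (Finset.univ.filter fun x => vb x = false).card = t)
    (hb : n ≤ (Finset.univ.filter fun x => vb x = true).card) :
    SubCG (blowup (fun _ : Fin (t + 1) => false) (fun _ _ => EColor.gray) n)
      (blowup vb ec n) := by
  classical
  -- white vertices
  have eW : (Finset.univ.filter fun x : V => vb x = false) ≃ Fin t :=
    (Finset.univ.filter fun x : V => vb x = false).equivFin.trans (finCongr hw)
  set w : Fin t → V := fun k => (eW.symm k : V) with hwdef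
  have hwmem : ∀ k, vb (w k) = false := fun k =>
    (Finset.mem_filter.mp (eW.symm k).2).2
  have hwinj : Function.Injective w := fun a c h =>
    eW.symm.injective (Subtype.ext h)
  -- black vertices
  set B := (Finset.univ.filter fun x : V => vb x = true) with hBdef
  set b : Fin n → V := fun i => (B.equivFin.symm (Fin.castLE hb i) : V) with hbdef
  have hbmem : ∀ i, vb (b i) = true := fun i =>
    (Finset.mem_filter.mp (B.equivFin.symm _).2).2
  have hbinj : Function.Injective b := fun a c h => by
    have : Fin.castLE hb a = Fin.castLE hb c := B.equivFin.symm.injective (Subtype.ext h)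
    exact Fin.castLE_injective hb this
  have hwb : ∀ k i, w k ≠ b i := fun k i h => by
    have := hwmem k; rw [h, hbmem i] at this; exact Bool.noConfusion this
  -- gray lemma: any edge with a white endpoint is gray
  have hgray : ∀ x y, x ≠ y → (vb x = false ∨ vb y = false) → ec x y = EColor.gray := by
    intro x y hxy hv
    cases h : ec x y with
    | black => exact absurd h (hnb x y hxy)
    | gray => rfl
    | white =>
      rcases hwe x y hxy h with ⟨h1, h2⟩
      rcases hv with hv | hv
      · rw [h1] at hv; exact Bool.noConfusion hv
      · rw [h2] at hv; exact Bool.noConfusion hv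
  refine ⟨fun a => if h : (a.1 : ℕ) < t then (w ⟨a.1, h⟩, a.2) else (b a.2, a.2), ?_, ?_⟩
  · rintro ⟨k, i⟩ ⟨l, j⟩ h
    dsimp only at h
    by_cases hk : (k : ℕ) < t <;> by_cases hl : (l : ℕ) < t <;> simp only [hk, hl, dif_pos, dif_neg, not_false_iff] at h
    · rw [Prod.mk.injEq] at h
      have hkl : (k : ℕ) = (l : ℕ) := Fin.mk.inj_iff.mp (hwinj h.1)
      exact Prod.ext (Fin.ext hkl) h.2
    · exact absurd (congrArg Prod.fst h) (hwb _ _)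
    · exact absurd (congrArg Prod.fst h).symm (hwb _ _)
    · rw [Prod.mk.injEq] at h
      have hij : i = j := h.2
      have hkl : (k : ℕ) = (l : ℕ) := by
        have h1 := k.isLt; have h2 := l.isLt; omega
      exact Prod.ext (Fin.ext hkl) hij
  · rintro ⟨k, i⟩ ⟨l, j⟩ hab
    have hnotblack : blowup (fun _ : Fin (t + 1) => false) (fun _ _ => EColor.gray) n (k, i) (l, j) ≠ EColor.black := by
      unfold blowup; dsimp only
      split <;> simp
    refine ⟨fun h => absurd h hnotblack, ?_, ?_⟩
    · -- source white: same class
      intro hsw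
      have hkl : k = l := by
        by_contra hne
        simp [blowup, hne] at hsw
      subst hkl
      have hij : i ≠ j := fun h => hab (by rw [h])
      by_cases hk : (k : ℕ) < t
      · simp only [dif_pos hk]
        left
        simp [blowup, hwmem]
      · simp only [dif_neg hk]
        have hbb : b i ≠ b j := fun h => hij (hbinj h)
        have : ec (b i) (b j) ≠ EColor.black := hnb _ _ hbb
        simp only [blowup, hbb, if_neg]
        cases h : ec (b i) (b j) with
        | black => exact absurd h this
        | white => left; rfl
        | gray => right; rfl
    · -- source gray: different classes
      intro hsg
      have hkl : k ≠ l := by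
        intro h
        subst h
        simp [blowup, show (fun _ : Fin (t+1) => false) k = false from rfl] at hsg
      by_cases hk : (k : ℕ) < t <;> by_cases hl : (l : ℕ) < t <;>
        simp only [dif_pos, dif_neg, hk, hl, not_false_iff]
      · have hne : w ⟨k, hk⟩ ≠ w ⟨l, hl⟩ := fun h => hkl (Fin.ext (Fin.mk.inj_iff.mp (hwinj h)))
        simp only [blowup, hne, if_neg]
        exact hgray _ _ hne (Or.inl (hwmem _))
      · have hne : w ⟨k, hk⟩ ≠ b j := hwb _ _
        simp only [blowup, hne, if_neg]
        exact hgray _ _ hne (Or.inl (hwmem _))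
      · have hne : b i ≠ w ⟨l, hl⟩ := fun h => hwb _ _ h.symm
        simp only [blowup, hne, if_neg]
        exact hgray _ _ hne (Or.inr (hwmem _))
      · exact absurd (Fin.ext (by omega : (k:ℕ) = l)) hkl
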